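/- Let ρ ≥ 0 with ρ < 1 and let u ∈ (0, 1/2]. Then C(u,u;ρ) ≤ 2u·g(u;ρ), i.e. Φ₂(Φ⁻¹(u),Φ⁻¹(u);ρ) ≤ 2u·Φ(√((1−ρ)/(1+ρ))·Φ⁻¹(u)). -/

import Mathlib

open MeasureTheory Real Set

/-- Standard normal density φ. -/
noncomputable def stdPdf (x : ℝ) : ℝ :=
  (1 / Real.sqrt (2 * Real.pi)) * Real.exp (-x ^ 2 / 2)

/-- Standard normal distribution function Φ. -/
noncomputable def stdCdf (h : ℝ) : ℝ := ∫ x in Set.Iio h, stdPdf x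

/-- Inverse Φ⁻¹ of the standard normal distribution function (on (0,1)). -/
noncomputable def stdQuantile : ℝ → ℝ := Function.invFun stdCdf

/-- Bivariate standard normal density φ₂ with correlation ρ. -/
noncomputable def binPdf (x y ρ : ℝ) : ℝ :=
  (1 / (2 * Real.pi * Real.sqrt (1 - ρ ^ 2))) *
    Real.exp (-(x ^ 2 - 2 * ρ * x * y + y ^ 2) / (2 * (1 - ρ ^ 2)))

/-- Bivariate standard normal distribution function Φ₂. -/
noncomputable def binCdf (h k ρ : ℝ) : ℝ :=
  ∫ x in Set.Iio h, ∫ y in Set.Iio k, binPdf x y ρ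

/-- The bivariate normal copula C(u,v;ρ) = Φ₂(Φ⁻¹(u),Φ⁻¹(v);ρ). -/
noncomputable def normCopula (u v ρ : ℝ) : ℝ :=
  binCdf (stdQuantile u) (stdQuantile v) ρ

/-- g(u;ρ) = Φ(√((1−ρ)/(1+ρ))·Φ⁻¹(u)). -/
noncomputable def gFun (u ρ : ℝ) : ℝ :=
  stdCdf (Real.sqrt ((1 - ρ) / (1 + ρ)) * stdQuantile u)

namespace UBAux

open Filter

lemma stdPdf_eq : stdPdf = fun x => (1 / Real.sqrt (2 * Real.pi)) * Real.exp (-(1/2) * x ^ 2) := by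
  funext x; unfold stdPdf; ring_nf

lemma stdPdf_nonneg (x : ℝ) : 0 ≤ stdPdf x := by
  unfold stdPdf; positivity

lemma stdPdf_cont : Continuous stdPdf := by
  unfold stdPdf; fun_prop

lemma integrable_stdPdf : Integrable stdPdf := by
  rw [stdPdf_eq]
  exact (integrable_exp_neg_mul_sq (by norm_num : (0:ℝ) < 1/2)).const_mul _

lemma integral_stdPdf : ∫ x, stdPdf x = 1 := by
  rw [stdPdf_eq, integral_const_mul, integral_gaussian,
    show Real.pi / (1/2) = 2 * Real.pi by ring, one_div,
    inv_mul_cancel₀ (by positivity)]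

lemma stdCdf_nonneg (h : ℝ) : 0 ≤ stdCdf h :=
  setIntegral_nonneg measurableSet_Iio fun x _ => stdPdf_nonneg x

lemma stdCdf_le_one (h : ℝ) : stdCdf h ≤ 1 := by
  rw [← integral_stdPdf]
  exact setIntegral_le_integral integrable_stdPdf (Eventually.of_forall stdPdf_nonneg)

lemma stdCdf_mono : Monotone stdCdf := fun a b hab =>
  setIntegral_mono_set integrable_stdPdf.integrableOn
    (Eventually.of_forall stdPdf_nonneg)
    (HasSubset.Subset.eventuallyLE (Iio_subset_Iio hab))

lemma stdCdf_eq (b : ℝ) : stdCdf b = stdCdf 0 + ∫ x in (0:ℝ)..b, stdPdf x := by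
  have h0 : stdCdf 0 = ∫ x in Iic (0:ℝ), stdPdf x := setIntegral_congr_set Iio_ae_eq_Iic
  have hb : stdCdf b = ∫ x in Iic b, stdPdf x := setIntegral_congr_set Iio_ae_eq_Iic
  rw [hb, h0, ← intervalIntegral.integral_Iic_sub_Iic integrable_stdPdf.integrableOn
    integrable_stdPdf.integrableOn]
  ring

lemma stdCdf_cont : Continuous stdCdf := by
  have h : Continuous fun b => stdCdf 0 + ∫ x in (0:ℝ)..b, stdPdf x :=
    continuous_const.add (integrable_stdPdf.continuous_primitive 0)
  simpa only [← stdCdf_eq] using h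

lemma tendsto_stdCdf_atTop : Tendsto stdCdf atTop (nhds 1) := by
  have h := tendsto_setIntegral_of_monotone (μ := volume) (s := fun r : ℝ => Iio r)
    (fun r => measurableSet_Iio) (fun a b hab => Iio_subset_Iio hab)
    (by rw [iUnion_Iio]; exact integrable_stdPdf.integrableOn)
  rw [iUnion_Iio] at h
  simpa [integral_stdPdf] using (show Tendsto stdCdf atTop (nhds (∫ x in univ, stdPdf x)) from h)

lemma tendsto_stdCdf_atBot : Tendsto stdCdf atBot (nhds 0) := by
  have h := tendsto_setIntegral_of_antitone (μ := volume) (s := fun r : ℝ => Iio (-r))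
    (fun r => measurableSet_Iio) (fun a b hab => Iio_subset_Iio (by linarith))
    ⟨0, integrable_stdPdf.integrableOn⟩
  have hempty : ⋂ r : ℝ, Iio (-r) = (∅ : Set ℝ) := by
    ext x
    simp only [mem_iInter, mem_Iio, mem_empty_iff_false, iff_false, not_forall, not_lt]
    exact ⟨-x, by linarith⟩
  rw [hempty] at h
  simp only [Measure.restrict_empty, integral_zero_measure] at h
  have h2 : Tendsto (fun r : ℝ => stdCdf (-r)) atTop (nhds 0) := h
  have h3 := h2.comp (tendsto_neg_atBot_atTop : Tendsto (fun x : ℝ => -x) atBot atTop)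
  exact h3.congr fun x => by simp [Function.comp]

lemma stdCdf_surj {u : ℝ} (h0 : 0 < u) (h1 : u < 1) : ∃ x, stdCdf x = u := by
  obtain ⟨b, hb⟩ := (tendsto_stdCdf_atTop.eventually (eventually_gt_nhds h1)).exists
  obtain ⟨a, ha⟩ := (tendsto_stdCdf_atBot.eventually (eventually_lt_nhds h0)).exists
  exact intermediate_value_univ a b stdCdf_cont ⟨ha.le, hb.le⟩

lemma stdCdf_stdQuantile {u : ℝ} (h0 : 0 < u) (h1 : u < 1) : stdCdf (stdQuantile u) = u :=
  Function.invFun_eq (stdCdf_surj h0 h1)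

lemma integral_comp_affine (f : ℝ → ℝ) {s : ℝ} (hs : 0 < s) (m : ℝ) :
    ∫ x, f ((x - m) / s) = s * ∫ t, f t := by
  have h1 : ∀ x : ℝ, f ((x - m) / s) = (fun z => f (s⁻¹ * z)) (x - m) := by
    intro x; simp [div_eq_inv_mul]
  simp_rw [h1]
  rw [integral_sub_right_eq_self (μ := volume) (fun z => f (s⁻¹ * z)) m,
    Measure.integral_comp_mul_left (fun z => f z) s⁻¹, inv_inv, abs_of_pos hs, smul_eq_mul]

lemma setIntegral_comp_affine (f : ℝ → ℝ) {s : ℝ} (hs : 0 < s) (m y : ℝ) :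
    ∫ x in Iio y, f ((x - m) / s) = s * ∫ t in Iio ((y - m) / s), f t := by
  rw [← integral_indicator measurableSet_Iio, ← integral_indicator measurableSet_Iio]
  have h1 : ∀ x : ℝ, (Iio y).indicator (fun x => f ((x - m) / s)) x
      = (Iio ((y - m) / s)).indicator f ((x - m) / s) := by
    intro x
    simp only [indicator_apply, mem_Iio]
    by_cases hx : x < y
    · rw [if_pos hx, if_pos (by gcongr)]
    · have hle : (y - m) / s ≤ (x - m) / s := by gcongr; exact not_lt.mp hx
      rw [if_neg hx, if_neg (not_lt.mpr hle)]
  simp_rw [h1]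
  exact integral_comp_affine _ hs m

lemma integrable_comp_affine {f : ℝ → ℝ} (hf : Integrable f) {s : ℝ} (hs : 0 < s) (m : ℝ) :
    Integrable fun x => f ((x - m) / s) := by
  have h1 : Integrable fun z => f (z / s) := hf.comp_div hs.ne'
  have heq : (fun x => f ((x - m) / s)) = (fun z => f (z / s)) ∘ (fun x => x + (-m)) := by
    funext x; simp [sub_eq_add_neg]
  rw [heq, (measurePreserving_add_right (volume : Measure ℝ) (-m)).integrable_comp
    h1.aestronglyMeasurable]
  exact h1

variable {ρ : ℝ}

lemma one_sub_sq_pos (hρ0 : 0 ≤ ρ) (hρ1 : ρ < 1) : (0:ℝ) < 1 - ρ ^ 2 := by nlinarith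

lemma s_pos (hρ0 : 0 ≤ ρ) (hρ1 : ρ < 1) : 0 < Real.sqrt (1 - ρ ^ 2) :=
  Real.sqrt_pos.mpr (one_sub_sq_pos hρ0 hρ1)

lemma binPdf_nonneg (x y : ℝ) : 0 ≤ binPdf x y ρ := by
  unfold binPdf
  positivity

lemma binPdf_symm (x y : ℝ) : binPdf x y ρ = binPdf y x ρ := by
  unfold binPdf; ring_nf

lemma binPdf_factor (hρ0 : 0 ≤ ρ) (hρ1 : ρ < 1) (x y : ℝ) :
    binPdf x y ρ = stdPdf x *
      ((Real.sqrt (1 - ρ ^ 2))⁻¹ * stdPdf ((y - ρ * x) / Real.sqrt (1 - ρ ^ 2))) := by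
  have h1 : (0:ℝ) < 1 - ρ ^ 2 := one_sub_sq_pos hρ0 hρ1
  have hs : 0 < Real.sqrt (1 - ρ ^ 2) := s_pos hρ0 hρ1
  have hs2 : Real.sqrt (1 - ρ ^ 2) ^ 2 = 1 - ρ ^ 2 := Real.sq_sqrt h1.le
  have h2π : Real.sqrt (2 * Real.pi) * Real.sqrt (2 * Real.pi) = 2 * Real.pi :=
    Real.mul_self_sqrt (by positivity)
  unfold binPdf stdPdf
  rw [div_pow, hs2]
  have hexp : Real.exp (-x ^ 2 / 2) * Real.exp (-((y - ρ * x) ^ 2 / (1 - ρ ^ 2)) / 2)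
      = Real.exp (-(x ^ 2 - 2 * ρ * x * y + y ^ 2) / (2 * (1 - ρ ^ 2))) := by
    rw [← Real.exp_add]
    congr 1
    field_simp
    ring
  rw [← hexp]
  have ha : Real.sqrt 2 * Real.sqrt 2 = 2 := Real.mul_self_sqrt (by norm_num)
  have hb : Real.sqrt Real.pi * Real.sqrt Real.pi = Real.pi :=
    Real.mul_self_sqrt Real.pi_pos.le
  field_simp
  linear_combination h2π

lemma c_eq (hρ0 : 0 ≤ ρ) (hρ1 : ρ < 1) :
    (1 - ρ) / Real.sqrt (1 - ρ ^ 2) = Real.sqrt ((1 - ρ) / (1 + ρ)) := by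
  have h1 : (0:ℝ) < 1 - ρ ^ 2 := one_sub_sq_pos hρ0 hρ1
  have h2 : (0:ℝ) < 1 + ρ := by linarith
  rw [show (1 - ρ) / (1 + ρ) = (1 - ρ) ^ 2 / (1 - ρ ^ 2) by
    rw [div_eq_div_iff h2.ne' h1.ne']; ring]
  rw [Real.sqrt_div (sq_nonneg _), Real.sqrt_sq (by linarith : (0:ℝ) ≤ 1 - ρ)]

lemma inner_eq (hρ0 : 0 ≤ ρ) (hρ1 : ρ < 1) (t : ℝ) :
    ∫ z in Iio t, binPdf t z ρ = stdPdf t * stdCdf (Real.sqrt ((1 - ρ) / (1 + ρ)) * t) := by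
  have hs : 0 < Real.sqrt (1 - ρ ^ 2) := s_pos hρ0 hρ1
  simp_rw [binPdf_factor hρ0 hρ1 t]
  rw [integral_const_mul, integral_const_mul,
    setIntegral_comp_affine stdPdf hs (ρ * t) t]
  have harg : (t - ρ * t) / Real.sqrt (1 - ρ ^ 2)
      = Real.sqrt ((1 - ρ) / (1 + ρ)) * t := by
    rw [← c_eq hρ0 hρ1]; ring
  rw [harg]
  have : ∫ x in Set.Iio (Real.sqrt ((1 - ρ) / (1 + ρ)) * t), stdPdf x
      = stdCdf (Real.sqrt ((1 - ρ) / (1 + ρ)) * t) := rfl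
  rw [this]
  field_simp

lemma integral_binPdf_slice (hρ0 : 0 ≤ ρ) (hρ1 : ρ < 1) (x : ℝ) :
    ∫ y, binPdf x y ρ = stdPdf x := by
  have hs : 0 < Real.sqrt (1 - ρ ^ 2) := s_pos hρ0 hρ1
  simp_rw [binPdf_factor hρ0 hρ1 x]
  rw [integral_const_mul, integral_const_mul, integral_comp_affine stdPdf hs (ρ * x),
    integral_stdPdf, mul_one, inv_mul_cancel₀ hs.ne', mul_one]

lemma integrable_binPdf_slice (hρ0 : 0 ≤ ρ) (hρ1 : ρ < 1) (x : ℝ) :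
    Integrable (fun y => binPdf x y ρ) := by
  have hs : 0 < Real.sqrt (1 - ρ ^ 2) := s_pos hρ0 hρ1
  simp_rw [binPdf_factor hρ0 hρ1 x]
  exact ((integrable_comp_affine integrable_stdPdf hs (ρ * x)).const_mul _).const_mul _

lemma binPdf_cont2 : Continuous (fun p : ℝ × ℝ => binPdf p.1 p.2 ρ) := by
  unfold binPdf; fun_prop

lemma integrable_binPdf2 (hρ0 : 0 ≤ ρ) (hρ1 : ρ < 1) :
    Integrable (fun p : ℝ × ℝ => binPdf p.1 p.2 ρ)
      ((volume : Measure ℝ).prod volume) := by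
  rw [integrable_prod_iff binPdf_cont2.aestronglyMeasurable]
  constructor
  · exact Eventually.of_forall fun x => integrable_binPdf_slice hρ0 hρ1 x
  · have heq : (fun x => ∫ y, ‖binPdf x y ρ‖) = stdPdf := by
      funext x
      simp_rw [Real.norm_of_nonneg (binPdf_nonneg _ _)]
      exact integral_binPdf_slice hρ0 hρ1 x
    rw [heq]
    exact integrable_stdPdf

end UBAux

open UBAux Filter

theorem upper_bound_2ug (ρ u : ℝ) (hρ0 : 0 ≤ ρ) (hρ1 : ρ < 1)
    (hu : u ∈ Set.Ioc (0 : ℝ) (1 / 2)) :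
    normCopula u u ρ ≤ 2 * u * gFun u ρ := by
  obtain ⟨hu0, hu2⟩ := hu
  have hu1 : u < 1 := lt_of_le_of_lt hu2 (by norm_num)
  set h := stdQuantile u with hh
  have hcdf : stdCdf h = u := stdCdf_stdQuantile hu0 hu1
  set c := Real.sqrt ((1 - ρ) / (1 + ρ)) with hc
  have hcnn : 0 ≤ c := Real.sqrt_nonneg _
  -- the triangle integrand
  set A : ℝ → ℝ := fun t => stdPdf t * stdCdf (c * t) with hA
  have hinner : ∀ t : ℝ, ∫ z in Iio t, binPdf t z ρ = A t := fun t => inner_eq hρ0 hρ1 t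
  have hAcont : Continuous A :=
    stdPdf_cont.mul (stdCdf_cont.comp (continuous_const.mul continuous_id))
  have hAint : Integrable A := by
    refine Integrable.mono' integrable_stdPdf hAcont.aestronglyMeasurable
      (Eventually.of_forall fun t => ?_)
    rw [Real.norm_of_nonneg (mul_nonneg (stdPdf_nonneg t) (stdCdf_nonneg _))]
    exact mul_le_of_le_one_right (stdPdf_nonneg t) (stdCdf_le_one _)
  -- the key triangle bound
  have hbound : ∫ t in Iio h, A t ≤ u * stdCdf (c * h) := by
    have h1 : ∫ t in Iio h, A t ≤ ∫ t in Iio h, stdPdf t * stdCdf (c * h) := by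
      refine setIntegral_mono_on hAint.integrableOn
        ((integrable_stdPdf.mul_const _).integrableOn) measurableSet_Iio fun t ht => ?_
      exact mul_le_mul_of_nonneg_left
        (stdCdf_mono (mul_le_mul_of_nonneg_left (le_of_lt ht) hcnn)) (stdPdf_nonneg t)
    calc ∫ t in Iio h, A t ≤ ∫ t in Iio h, stdPdf t * stdCdf (c * h) := h1
      _ = (∫ t in Iio h, stdPdf t) * stdCdf (c * h) := integral_mul_const _ _
      _ = u * stdCdf (c * h) := by rw [show (∫ t in Iio h, stdPdf t) = stdCdf h from rfl, hcdf]
  -- F: the indicator of the upper triangle slice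
  set F : ℝ → ℝ → ℝ := fun x y => (Ico x h).indicator (fun y => binPdf x y ρ) y with hF
  have hFun : Function.uncurry F
      = ({p : ℝ × ℝ | p.1 ≤ p.2 ∧ p.2 < h}).indicator (fun p => binPdf p.1 p.2 ρ) := by
    funext p
    obtain ⟨x, y⟩ := p
    simp only [Function.uncurry_apply_pair, hF]
    by_cases hxy : x ≤ y ∧ y < h
    · rw [indicator_of_mem (show y ∈ Ico x h from hxy),
        indicator_of_mem (show (x, y) ∈ {p : ℝ × ℝ | p.1 ≤ p.2 ∧ p.2 < h} from hxy)]
    · rw [indicator_of_notMem (show y ∉ Ico x h from hxy),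
        indicator_of_notMem (show (x, y) ∉ {p : ℝ × ℝ | p.1 ≤ p.2 ∧ p.2 < h} from hxy)]
  have hDmeas : MeasurableSet {p : ℝ × ℝ | p.1 ≤ p.2 ∧ p.2 < h} := by
    have : {p : ℝ × ℝ | p.1 ≤ p.2 ∧ p.2 < h}
        = {p : ℝ × ℝ | p.1 ≤ p.2} ∩ (Prod.snd ⁻¹' Iio h) := rfl
    rw [this]
    exact (measurableSet_le measurable_fst measurable_snd).inter
      (measurable_snd measurableSet_Iio)
  have hFint : Integrable (Function.uncurry F) ((volume : Measure ℝ).prod volume) := by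
    rw [hFun]
    exact (integrable_binPdf2 hρ0 hρ1).indicator hDmeas
  have hswap : ∫ x, ∫ y, F x y = ∫ y, ∫ x, F x y := integral_integral_swap hFint
  have hB : ∀ x, ∫ y, F x y = ∫ y in Ico x h, binPdf x y ρ := fun x =>
    integral_indicator measurableSet_Ico
  have hRHSy : ∀ y, ∫ x, F x y = (Iio h).indicator A y := by
    intro y
    by_cases hy : y < h
    · rw [indicator_of_mem (show y ∈ Iio h from hy)]
      have heq : (fun x => F x y) = (Iic y).indicator (fun x => binPdf x y ρ) := by
        funext x
        simp only [hF]
        by_cases hx : x ≤ y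
        · rw [indicator_of_mem (show y ∈ Ico x h from ⟨hx, hy⟩),
            indicator_of_mem (show x ∈ Iic y from hx)]
        · rw [indicator_of_notMem (show y ∉ Ico x h from fun hmem => hx hmem.1),
            indicator_of_notMem (show x ∉ Iic y from hx)]
      rw [heq, integral_indicator measurableSet_Iic,
        ← setIntegral_congr_set (Iio_ae_eq_Iic (a := y) (μ := volume))]
      have hsy : ∫ x in Iio y, binPdf x y ρ = ∫ x in Iio y, binPdf y x ρ :=
        setIntegral_congr_fun measurableSet_Iio fun x _ => binPdf_symm x y
      rw [hsy, hinner y]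
    · rw [indicator_of_notMem (show y ∉ Iio h from hy)]
      have heq : (fun x => F x y) = fun _ => (0:ℝ) := by
        funext x
        simp only [hF]
        rw [indicator_of_notMem (show y ∉ Ico x h from fun hmem => hy hmem.2)]
      rw [heq, integral_zero]
  -- integrability of the marginal of F
  have hBint : Integrable (fun x => ∫ y, F x y) := by
    have := hFint.integral_prod_left
    simpa [Function.uncurry] using this
  -- key splitting of binCdf
  have key : binCdf h h ρ = (∫ x in Iio h, A x) + ∫ x in Iio h, ∫ y, F x y := by
    unfold binCdf
    have hsplit : ∀ x ∈ Iio h,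
        (∫ y in Set.Iio h, binPdf x y ρ) = A x + ∫ y, F x y := by
      intro x hx
      rw [hB x]
      have hset : Iio x ∪ Ico x h = Iio h := by
        rw [Iio_union_Ico (le_trans inf_le_left le_rfl), sup_eq_right.mpr (le_of_lt hx)]
      have hdisj : Disjoint (Iio x) (Ico x h) :=
        Set.disjoint_left.mpr fun a ha hb => absurd hb.1 (not_le.mpr ha)
      rw [← hset, setIntegral_union hdisj measurableSet_Ico
        (integrable_binPdf_slice hρ0 hρ1 x).integrableOn
        (integrable_binPdf_slice hρ0 hρ1 x).integrableOn, hinner x]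
    rw [setIntegral_congr_fun measurableSet_Iio hsplit]
    exact integral_add hAint.integrableOn hBint.integrableOn
  -- rewrite second term via Fubini
  have hT2 : (∫ x in Iio h, ∫ y, F x y) = ∫ t in Iio h, A t := by
    rw [setIntegral_eq_integral_of_forall_compl_eq_zero (fun x hx => ?_)]
    · rw [hswap]
      simp_rw [hRHSy]
      exact integral_indicator measurableSet_Iio
    · rw [hB x, Ico_eq_empty (by simpa using hx)]
      simp
  have hfinal : binCdf h h ρ ≤ 2 * u * stdCdf (c * h) := by
    rw [key, hT2]
    calc (∫ t in Iio h, A t) + ∫ t in Iio h, A t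
        ≤ u * stdCdf (c * h) + u * stdCdf (c * h) := add_le_add hbound hbound
      _ = 2 * u * stdCdf (c * h) := by ring
  exact hfinal
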